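/- Fix λ > 0, γ > 1, α > 1/γ, and t ∈ ℝ. The function f(δ) = (1/2)(δ − t)² + (1/α)·ρ_{λ,γ}(|δ|), where ρ_{λ,γ} is the minimax concave penalty, is strictly convex on ℝ; consequently it has at most one global minimizer. -/

import Mathlib

open Set


/-- The minimax concave penalty (MCP): for `λ > 0`, `γ > 1`,
`ρ_{λ,γ}(θ) = λθ − θ²/(2γ)` for `θ ≤ γλ` and `ρ_{λ,γ}(θ) = λ²γ/2` otherwise. -/
noncomputable def mcpPenalty (lam gam θ : ℝ) : ℝ :=
  if θ ≤ gam * lam then lam * θ - θ ^ 2 / (2 * gam) else lam ^ 2 * gam / 2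

/-- A quadratic with positive leading coefficient is strictly convex on `ℝ`. -/
lemma strictConvexOn_quadratic (c b e : ℝ) (hc : 0 < c) :
    StrictConvexOn ℝ univ (fun x : ℝ => c * x ^ 2 + b * x + e) := by
  have hd1 : deriv (fun x : ℝ => c * x ^ 2 + b * x + e) = fun x => c * (2 * x) + b := by
    funext x
    have h1 : HasDerivAt (fun x : ℝ => c * x ^ 2 + b * x + e) (c * (2 * x) + b * 1 + 0) x := by
      have hp : HasDerivAt (fun x : ℝ => x ^ 2) (2 * x) x := by simpa using hasDerivAt_pow 2 x
      exact ((hp.const_mul c).add ((hasDerivAt_id x).const_mul b)).add (hasDerivAt_const x e)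
    simpa using h1.deriv
  apply strictConvexOn_of_deriv2_pos convex_univ (by fun_prop)
  intro x _
  have : deriv^[2] (fun x : ℝ => c * x ^ 2 + b * x + e) x
      = deriv (fun x => c * (2 * x) + b) x := by
    simp [Function.iterate_succ, hd1]
  rw [this]
  have h2 : HasDerivAt (fun x : ℝ => c * (2 * x) + b) (2 * c) x := by
    have := ((hasDerivAt_id x).const_mul (2:ℝ)).const_mul c
    simpa [mul_comm, mul_assoc] using this.add_const b
  rw [h2.deriv]; linarith

/-- The "Berhu"-type convex part of the decomposition of the MCP objective. -/
lemma convexOn_Gpart (lam gam α : ℝ) (hlam : 0 < lam) (hgam : 1 < gam) (hα : 0 < α) :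
    ConvexOn ℝ univ
      (fun δ : ℝ => (1 / α) * (lam * |δ| + (max (|δ| - gam * lam) 0) ^ 2 / (2 * gam))) := by
  have habs : ConvexOn ℝ univ (fun δ : ℝ => |δ|) := by
    exact convexOn_univ_norm (E := ℝ)
  have h1 : ConvexOn ℝ univ (fun δ : ℝ => lam * |δ|) := by
    simpa [smul_eq_mul] using habs.smul hlam.le
  have hm : ConvexOn ℝ univ (fun δ : ℝ => max (|δ| - gam * lam) 0) := by
    have : ConvexOn ℝ univ (fun δ : ℝ => |δ| - gam * lam) := by
      exact habs.add_const (-(gam * lam))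
    simpa [Pi.sup_def] using this.sup (convexOn_const 0 convex_univ)
  have hm2 : ConvexOn ℝ univ (fun δ : ℝ => (max (|δ| - gam * lam) 0) ^ 2) := by
    have := hm.pow (fun x _ => le_max_right _ _) (n := 2)
    simpa [Pi.pow_def] using this
  have hm3 : ConvexOn ℝ univ (fun δ : ℝ => (max (|δ| - gam * lam) 0) ^ 2 / (2 * gam)) := by
    have h := hm2.smul (c := 1 / (2 * gam)) (by positivity)
    simp only [smul_eq_mul] at h
    convert h using 2 with δ
    · rfl
    · rfl
    · ring
  have hsum := h1.add hm3
  have h := hsum.smul (c := 1 / α) (by positivity)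
  simpa [smul_eq_mul, Pi.add_def] using h

/-- **Strict convexity of the MCP proximal objective.** For `λ > 0`, `γ > 1`,
`α > 1/γ`, the function `f(δ) = (1/2)(δ − t)² + (1/α)ρ_{λ,γ}(|δ|)` is strictly
convex on `ℝ`; consequently it has at most one global minimizer. -/
theorem mcp_objective_strictConvex
    (lam gam α t : ℝ) (hlam : 0 < lam) (hgam : 1 < gam) (hα : 1 / gam < α) :
    StrictConvexOn ℝ Set.univ
      (fun δ : ℝ => (1 / 2) * (δ - t) ^ 2 + (1 / α) * mcpPenalty lam gam |δ|)
    ∧ ∀ δ₁ δ₂ : ℝ,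
      (∀ δ : ℝ, (1 / 2) * (δ₁ - t) ^ 2 + (1 / α) * mcpPenalty lam gam |δ₁|
          ≤ (1 / 2) * (δ - t) ^ 2 + (1 / α) * mcpPenalty lam gam |δ|) →
      (∀ δ : ℝ, (1 / 2) * (δ₂ - t) ^ 2 + (1 / α) * mcpPenalty lam gam |δ₂|
          ≤ (1 / 2) * (δ - t) ^ 2 + (1 / α) * mcpPenalty lam gam |δ|) →
      δ₁ = δ₂ := by
  have hg0 : (0:ℝ) < gam := lt_trans one_pos hgam
  have hα0 : (0:ℝ) < α := lt_trans (by positivity) hα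
  have hαγ : 1 < α * gam := by
    have := (div_lt_iff₀ hg0).mp hα
    linarith
  set c₀ : ℝ := (1 - 1 / (α * gam)) / 2 with hc₀
  have hc : 0 < c₀ := by
    have h1 : 1 / (α * gam) < 1 := by
      rw [div_lt_one (by positivity)]; exact hαγ
    rw [hc₀]; linarith
  have hF : (fun δ : ℝ => (1 / 2) * (δ - t) ^ 2 + (1 / α) * mcpPenalty lam gam |δ|)
      = fun δ : ℝ => (c₀ * δ ^ 2 + (-t) * δ + t ^ 2 / 2)
        + (1 / α) * (lam * |δ| + (max (|δ| - gam * lam) 0) ^ 2 / (2 * gam)) := by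
    funext δ
    have hsq : |δ| ^ 2 = δ ^ 2 := sq_abs δ
    rw [mcpPenalty]
    by_cases h : |δ| ≤ gam * lam
    · rw [if_pos h, max_eq_right (by linarith), hsq, hc₀]
      field_simp
      ring
    · rw [if_neg h, max_eq_left (by push_neg at h; linarith), hc₀]
      have h2 : lam * |δ| + (|δ| - gam * lam) ^ 2 / (2 * gam)
          = δ ^ 2 / (2 * gam) + lam ^ 2 * gam / 2 := by
        field_simp
        linear_combination hsq
      rw [h2]
      field_simp
      ring
  have hsc : StrictConvexOn ℝ univ
      (fun δ : ℝ => (1 / 2) * (δ - t) ^ 2 + (1 / α) * mcpPenalty lam gam |δ|) := by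
    rw [hF]
    have := (strictConvexOn_quadratic c₀ (-t) (t ^ 2 / 2) hc).add_convexOn
      (convexOn_Gpart lam gam α hlam hgam hα0)
    simpa [Pi.add_def] using this
  refine ⟨hsc, fun δ₁ δ₂ h1 h2 => ?_⟩
  exact hsc.eq_of_isMinOn (isMinOn_iff.mpr fun x _ => h1 x)
    (isMinOn_iff.mpr fun x _ => h2 x) (mem_univ _) (mem_univ _)
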